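/- Let P be a symmetric N×N stochastic matrix with orthonormal eigendecomposition P = Φ Λ Φ*, where the top eigenvector is 𝟙/√N with eigenvalue 1. Let g be a vector in ℝ^N lying in the span of eigenvectors with |eigenvalue| > λ > 0 and with ⟨g, 𝟙⟩ = 0 (i.e., g orthogonal to constants). Then for any probability weight vector a (a_w ≥ 0, Σ a_w = 1), |Σ_w a_w g(w)| ≤ (1/λ) (‖P a‖₂² − 1/N)^{1/2} ‖g‖₂. -/

import Mathlib

lemma sq_sum_orth {N : ℕ} (S : Finset (Fin N)) (φ : Fin N → Fin N → ℝ)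
    (horth : ∀ i j, (∑ v, φ i v * φ j v) = if i = j then (1 : ℝ) else 0)
    (c : Fin N → ℝ) :
    (∑ v, (∑ i ∈ S, c i * φ i v) ^ 2) = ∑ i ∈ S, (c i) ^ 2 := by
  have h1 : ∀ v : Fin N, (∑ i ∈ S, c i * φ i v) ^ 2
      = ∑ i ∈ S, ∑ j ∈ S, (c i * c j) * (φ i v * φ j v) := by
    intro v
    rw [sq, Finset.sum_mul_sum]
    exact Finset.sum_congr rfl fun i _ => Finset.sum_congr rfl fun j _ => by ring
  calc (∑ v, (∑ i ∈ S, c i * φ i v) ^ 2)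
      = ∑ i ∈ S, ∑ j ∈ S, (c i * c j) * (∑ v, φ i v * φ j v) := by
        simp_rw [h1, Finset.mul_sum]
        rw [Finset.sum_comm]
        exact Finset.sum_congr rfl fun i _ => Finset.sum_comm
    _ = ∑ i ∈ S, (c i) ^ 2 := by
        simp_rw [horth]
        refine Finset.sum_congr rfl fun i hi => ?_
        simp only [mul_ite, mul_one, mul_zero, Finset.sum_ite_eq, hi, if_true, sq]

lemma bessel {N : ℕ} (S : Finset (Fin N)) (φ : Fin N → Fin N → ℝ)
    (horth : ∀ i j, (∑ v, φ i v * φ j v) = if i = j then (1 : ℝ) else 0)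
    (q : Fin N → ℝ) :
    ∑ i ∈ S, (∑ v, q v * φ i v) ^ 2 ≤ ∑ v, q v ^ 2 := by
  set d : Fin N → ℝ := fun i => ∑ v, q v * φ i v with hd
  have cross : (∑ v, q v * (∑ i ∈ S, d i * φ i v)) = ∑ i ∈ S, d i ^ 2 := by
    simp_rw [Finset.mul_sum]
    rw [Finset.sum_comm]
    refine Finset.sum_congr rfl fun i _ => ?_
    have : ∀ v : Fin N, q v * (d i * φ i v) = d i * (q v * φ i v) := fun v => by ring
    simp_rw [this, ← Finset.mul_sum, sq]
    rfl
  have key : (0:ℝ) ≤ ∑ v, (q v - ∑ i ∈ S, d i * φ i v) ^ 2 :=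
    Finset.sum_nonneg fun v _ => sq_nonneg _
  have expand : (∑ v, (q v - ∑ i ∈ S, d i * φ i v) ^ 2)
      = (∑ v, q v ^ 2) - 2 * (∑ v, q v * (∑ i ∈ S, d i * φ i v))
        + (∑ v, (∑ i ∈ S, d i * φ i v) ^ 2) := by
    have h2 : ∀ v : Fin N, (q v - ∑ i ∈ S, d i * φ i v) ^ 2
        = q v ^ 2 - 2 * (q v * (∑ i ∈ S, d i * φ i v))
          + (∑ i ∈ S, d i * φ i v) ^ 2 := fun v => by ring
    simp_rw [h2, Finset.sum_add_distrib, Finset.sum_sub_distrib, Finset.mul_sum]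
  rw [expand, cross, sq_sum_orth S φ horth d] at key
  linarith

open Classical in
/-- Quadrature bound for a high-frequency, mean-zero vector `g`:
`|∑ a_w g(w)| ≤ (1/λ) (‖Pa‖² − 1/N)^{1/2} ‖g‖`. -/
theorem stmt2 (N : ℕ) (hN : 0 < N)
    (P : Matrix (Fin N) (Fin N) ℝ) (hPsym : P.IsSymm)
    (hPnonneg : ∀ i j, 0 ≤ P i j) (hProws : ∀ i, (∑ j, P i j) = 1)
    (φ : Fin N → Fin N → ℝ) (μ : Fin N → ℝ)
    (horth : ∀ i j, (∑ v, φ i v * φ j v) = if i = j then (1 : ℝ) else 0)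
    (heig : ∀ i, P.mulVec (φ i) = μ i • φ i)
    (hPone : P.mulVec (fun _ => (1 : ℝ)) = fun _ => (1 : ℝ))
    (lam : ℝ) (hlam : 0 < lam)
    (g : Fin N → ℝ)
    (hg : ∃ c : Fin N → ℝ,
      g = fun v => ∑ i ∈ Finset.univ.filter (fun i => lam < |μ i|), c i * φ i v)
    (hgmean : (∑ v, g v) = 0)
    (a : Fin N → ℝ) (hanneg : ∀ w, 0 ≤ a w) (ha : (∑ w, a w) = 1) :
    |∑ w, a w * g w|
      ≤ (1 / lam) * Real.sqrt ((∑ v, (P.mulVec a v) ^ 2) - 1 / N)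
          * Real.sqrt (∑ v, g v ^ 2) := by
  obtain ⟨c, hgc⟩ := hg
  set S := Finset.univ.filter (fun i => lam < |μ i|) with hSdef
  have hNR : (0:ℝ) < (N:ℝ) := by exact_mod_cast hN
  have hPentry : ∀ v j, P j v = P v j := fun v j => congrFun (congrFun hPsym v) j
  have hmv : ∀ (x : Fin N → ℝ) (v : Fin N), P.mulVec x v = ∑ j, P v j * x j :=
    fun x v => rfl
  have hcol : ∀ j, (∑ v, P v j) = 1 := by
    intro j
    calc (∑ v, P v j) = ∑ v, P j v := Finset.sum_congr rfl fun v _ => hPentry j v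
      _ = 1 := hProws j
  -- sum of Pa is 1
  have hsumPa : (∑ v, P.mulVec a v) = 1 := by
    simp_rw [hmv]
    rw [Finset.sum_comm]
    calc (∑ j, ∑ v, P v j * a j) = ∑ j, (∑ v, P v j) * a j := by
          simp_rw [Finset.sum_mul]
      _ = ∑ j, a j := by simp_rw [hcol, one_mul]
      _ = 1 := ha
  -- the shifted vector
  set b : Fin N → ℝ := fun v => a v - 1 / N with hbdef
  set q : Fin N → ℝ := fun v => P.mulVec b v with hqdef
  have hqv : ∀ v, q v = P.mulVec a v - 1 / N := by
    intro v
    simp only [hqdef, hmv]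
    have : ∀ j : Fin N, P v j * b j = P v j * a j - P v j * (1/N) := by
      intro j; simp only [hbdef]; ring
    simp_rw [this, Finset.sum_sub_distrib, ← Finset.sum_mul, hProws v, one_mul]
  have hq2 : (∑ v, q v ^ 2) = (∑ v, (P.mulVec a v) ^ 2) - 1 / N := by
    have h1 : ∀ v, q v ^ 2
        = (P.mulVec a v) ^ 2 - (2/N) * (P.mulVec a v) + (1/N) * (1/N) := by
      intro v; rw [hqv v]; ring
    simp_rw [h1, Finset.sum_add_distrib, Finset.sum_sub_distrib, ← Finset.mul_sum,
      hsumPa, Finset.sum_const, Finset.card_univ, Fintype.card_fin, nsmul_eq_mul]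
    field_simp
    ring
  -- eigen relation for the coefficients d i
  set d : Fin N → ℝ := fun i => ∑ v, q v * φ i v with hddef
  have hd_eig : ∀ i, d i = μ i * (∑ j, b j * φ i j) := by
    intro i
    have h1 : d i = ∑ j, b j * (∑ v, P v j * φ i v) := by
      simp only [hddef, hqdef, hmv]
      simp_rw [Finset.sum_mul]
      rw [Finset.sum_comm]
      refine Finset.sum_congr rfl fun j _ => ?_
      rw [Finset.mul_sum]
      exact Finset.sum_congr rfl fun v _ => by ring
    have h2 : ∀ j, (∑ v, P v j * φ i v) = μ i * φ i j := by
      intro j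
      have : (∑ v, P v j * φ i v) = P.mulVec (φ i) j := by
        rw [hmv]
        exact Finset.sum_congr rfl fun v _ => by rw [hPentry v j]
      rw [this, heig i]
      simp [Pi.smul_apply, smul_eq_mul]
    rw [h1]
    simp_rw [h2, Finset.mul_sum]
    exact Finset.sum_congr rfl fun j _ => by ring
  -- rewrite the quadrature sum
  have hag : (∑ w, a w * g w) = ∑ i ∈ S, (c i / μ i) * d i := by
    have h1 : (∑ w, a w * g w) = ∑ w, b w * g w := by
      have : ∀ w, a w * g w = b w * g w + (1/N) * g w := by
        intro w; simp only [hbdef]; ring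
      simp_rw [this, Finset.sum_add_distrib, ← Finset.mul_sum, hgmean, mul_zero, add_zero]
    have h2 : (∑ w, b w * g w) = ∑ i ∈ S, c i * (∑ v, b v * φ i v) := by
      rw [hgc]
      simp_rw [Finset.mul_sum]
      rw [Finset.sum_comm]
      refine Finset.sum_congr rfl fun i _ => ?_
      exact Finset.sum_congr rfl fun v _ => by ring
    have h3 : ∀ i ∈ S, c i * (∑ v, b v * φ i v) = (c i / μ i) * d i := by
      intro i hi
      have hμ : μ i ≠ 0 := by
        have : lam < |μ i| := (Finset.mem_filter.mp hi).2
        intro h; rw [h] at this; simp at this; linarith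
      rw [hd_eig i]
      field_simp
    rw [h1, h2]
    exact Finset.sum_congr rfl h3
  -- Cauchy–Schwarz and the two norm identities
  have hCS : (∑ i ∈ S, (c i / μ i) * d i) ^ 2
      ≤ (∑ i ∈ S, (c i / μ i) ^ 2) * (∑ i ∈ S, d i ^ 2) :=
    Finset.sum_mul_sq_le_sq_mul_sq S _ _
  have hcmu : (∑ i ∈ S, (c i / μ i) ^ 2) ≤ (1 / lam ^ 2) * ∑ i ∈ S, c i ^ 2 := by
    rw [Finset.mul_sum]
    refine Finset.sum_le_sum fun i hi => ?_
    have hμ : lam < |μ i| := (Finset.mem_filter.mp hi).2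
    have h1 : lam ^ 2 ≤ μ i ^ 2 := by
      have := sq_abs (μ i)
      nlinarith [abs_nonneg (μ i)]
    have hμ0 : (0:ℝ) < μ i ^ 2 := by nlinarith
    rw [div_pow]
    have h2 : c i ^ 2 / μ i ^ 2 ≤ c i ^ 2 / lam ^ 2 :=
      div_le_div_of_nonneg_left (sq_nonneg _) (by positivity) h1
    calc c i ^ 2 / μ i ^ 2 ≤ c i ^ 2 / lam ^ 2 := h2
      _ = 1 / lam ^ 2 * c i ^ 2 := by ring
  have hbessel : (∑ i ∈ S, d i ^ 2) ≤ ∑ v, q v ^ 2 := bessel S φ horth q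
  have hgnorm : (∑ v, g v ^ 2) = ∑ i ∈ S, c i ^ 2 := by
    rw [hgc]; exact sq_sum_orth S φ horth c
  -- assemble
  have hX2 : (∑ w, a w * g w) ^ 2
      ≤ (1 / lam ^ 2) * (∑ i ∈ S, c i ^ 2) * (∑ v, q v ^ 2) := by
    rw [hag]
    calc (∑ i ∈ S, (c i / μ i) * d i) ^ 2
        ≤ (∑ i ∈ S, (c i / μ i) ^ 2) * (∑ i ∈ S, d i ^ 2) := hCS
      _ ≤ ((1 / lam ^ 2) * ∑ i ∈ S, c i ^ 2) * (∑ v, q v ^ 2) := by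
          refine mul_le_mul hcmu hbessel (Finset.sum_nonneg fun i _ => sq_nonneg _) ?_
          have : (0:ℝ) ≤ ∑ i ∈ S, c i ^ 2 := Finset.sum_nonneg fun i _ => sq_nonneg _
          positivity
      _ = (1 / lam ^ 2) * (∑ i ∈ S, c i ^ 2) * (∑ v, q v ^ 2) := by ring
  have habs : |∑ w, a w * g w| = Real.sqrt ((∑ w, a w * g w) ^ 2) :=
    (Real.sqrt_sq_eq_abs _).symm
  rw [habs, hgnorm, ← hq2]
  calc Real.sqrt ((∑ w, a w * g w) ^ 2)
      ≤ Real.sqrt ((1 / lam ^ 2) * (∑ i ∈ S, c i ^ 2) * (∑ v, q v ^ 2)) :=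
        Real.sqrt_le_sqrt hX2
    _ = 1 / lam * Real.sqrt (∑ v, q v ^ 2) * Real.sqrt (∑ i ∈ S, c i ^ 2) := by
        rw [Real.sqrt_mul (by positivity), Real.sqrt_mul (by positivity),
          show (1 / lam ^ 2 : ℝ) = (1 / lam) ^ 2 by ring,
          Real.sqrt_sq (by positivity)]
        ring
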